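/- Let R, R' and S be TRSs over a signature Σ and let T be a set of ground terms. Let (A,[[·]],≥) be a monotone partial model for R ∪ R' ∪ S with T ⊆ L(A), such that for every rule ℓ→r ∈ R' and every assignment α : Var(ℓ) → A the interpretation [[ℓ]]_α is undefined. Then SN_T(R/S) implies SN_T((R ∪ R')/S). -/
import Mathlib


namespace LocalTerm

/-- Terms over a signature `F` with arities `ar` and variables `X`. -/
inductive Tm (F : Type) (ar : F → ℕ) (X : Type) : Type
  | var : X → Tm F ar X
  | app : (f : F) → (Fin (ar f) → Tm F ar X) → Tm F ar X

/-- Substitution. -/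
def subst {F : Type} {ar : F → ℕ} {X Y : Type} (σ : X → Tm F ar Y) :
    Tm F ar X → Tm F ar Y
  | .var x => σ x
  | .app f ts => .app f fun i => subst σ (ts i)

/-- One-step rewrite relation of a set `R` of rules (over variables `X`),
acting on terms over variables `V`: a rule instance inside a one-hole context. -/
inductive Rw {F : Type} {ar : F → ℕ} {X V : Type}
    (R : Set (Tm F ar X × Tm F ar X)) : Tm F ar V → Tm F ar V → Prop
  | rule {l r : Tm F ar X} (h : (l, r) ∈ R) (σ : X → Tm F ar V) :
      Rw R (subst σ l) (subst σ r)
  | ctxt {f : F} {ts : Fin (ar f) → Tm F ar V} (i : Fin (ar f)) {t' : Tm F ar V} :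
      Rw R (ts i) t' → Rw R (Tm.app f ts) (Tm.app f (Function.update ts i t'))

/-- The set of variables of a term. -/
def Vars {F : Type} {ar : F → ℕ} {X : Type} : Tm F ar X → Set X
  | .var x => {x}
  | .app _ ts => ⋃ i, Vars (ts i)

/-- `R` is a TRS: no left-hand side is a variable,
and all variables of a right-hand side occur in the left-hand side. -/
def IsTRS {F : Type} {ar : F → ℕ} {X : Type}
    (R : Set (Tm F ar X × Tm F ar X)) : Prop :=
  ∀ p ∈ R, (∀ x : X, p.1 ≠ Tm.var x) ∧ Vars p.2 ⊆ Vars p.1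

/-- A partial interpretation of the function symbols in a set `A`:
for every `n`-ary symbol a partial function `Aⁿ ⇀ A`. -/
abbrev Interp (F : Type) (ar : F → ℕ) (A : Type) : Type :=
  ∀ f : F, (Fin (ar f) → A) → Option A

/-- `Eval I α t a` : the (partial) interpretation of `t` under assignment `α`
is defined and equal to `a`. -/
inductive Eval {F : Type} {ar : F → ℕ} {X A : Type}
    (I : Interp F ar A) (α : X → A) : Tm F ar X → A → Prop
  | var (x : X) : Eval I α (Tm.var x) (α x)
  | app {f : F} {ts : Fin (ar f) → Tm F ar X} (as : Fin (ar f) → A) {a : A}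
      (hts : ∀ i, Eval I α (ts i) (as i)) (hI : I f as = some a) :
      Eval I α (Tm.app f ts) a

/-- A set `T` of ground terms is defined if the interpretation of
every `t ∈ T` is defined. -/
def DefinedOn {F : Type} {ar : F → ℕ} {A : Type}
    (I : Interp F ar A) (T : Set (Tm F ar Empty)) : Prop :=
  ∀ t ∈ T, ∃ a : A, Eval I Empty.elim t a

/-- `succ` is a partial model for `R`: whenever the interpretation of a
left-hand side is defined, the right-hand side is defined as well and the
interpretations are related by `succ`. -/
def PartialModel {F : Type} {ar : F → ℕ} {X A : Type}
    (I : Interp F ar A) (succ : A → A → Prop)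
    (R : Set (Tm F ar X × Tm F ar X)) : Prop :=
  ∀ p ∈ R, ∀ (α : X → A) (a : A), Eval I α p.1 a →
    ∃ b : A, Eval I α p.2 b ∧ succ a b

/-- A partial function is closed w.r.t. a relation. -/
def ClosedFn {A : Type} {n : ℕ} (g : (Fin n → A) → Option A)
    (r : A → A → Prop) : Prop :=
  ∀ (v : Fin n → A) (i : Fin n) (b : A), r (v i) b → (g v).isSome →
    (g (Function.update v i b)).isSome

/-- A partial function is monotone w.r.t. a relation. -/
def MonoFn {A : Type} {n : ℕ} (g : (Fin n → A) → Option A)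
    (r : A → A → Prop) : Prop :=
  ∀ (v : Fin n → A) (i : Fin n) (b : A) (x y : A), r (v i) b →
    g v = some x → g (Function.update v i b) = some y → r x y

/-- `(A, I, r)` is a monotone partial algebra: every interpretation is
closed and monotone with respect to `r`. -/
def MonoAlg {F : Type} {ar : F → ℕ} {A : Type}
    (I : Interp F ar A) (r : A → A → Prop) : Prop :=
  ∀ f : F, ClosedFn (I f) r ∧ MonoFn (I f) r

/-- Well-foundedness: no infinite descending sequence. -/
def WFrel {A : Type} (r : A → A → Prop) : Prop :=
  ¬ ∃ f : ℕ → A, ∀ n : ℕ, r (f n) (f (n + 1))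

/-- `r` is terminating on `T`: no element of `T` starts an infinite `r`-sequence. -/
def SNon {B : Type} (r : B → B → Prop) (T : Set B) : Prop :=
  ∀ t ∈ T, ¬ ∃ f : ℕ → B, f 0 = t ∧ ∀ n : ℕ, r (f n) (f (n + 1))

/-- Relative termination on `T`: no element of `T` starts an infinite
`(r ∪ s)`-sequence containing infinitely many `r`-steps. -/
def SNrelOn {B : Type} (r s : B → B → Prop) (T : Set B) : Prop :=
  ∀ t ∈ T, ¬ ∃ f : ℕ → B, f 0 = t ∧
    (∀ n : ℕ, r (f n) (f (n + 1)) ∨ s (f n) (f (n + 1))) ∧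
    (∀ m : ℕ, ∃ n : ℕ, m ≤ n ∧ r (f n) (f (n + 1)))

/-- Relative termination (on everything). -/
def SNrel {B : Type} (r s : B → B → Prop) : Prop := SNrelOn r s Set.univ


section Aux

variable {F : Type} {ar : F → ℕ} {X A : Type}

theorem eval_det {I : Interp F ar A} {Y : Type} {α : Y → A} {t : Tm F ar Y}
    {a b : A} (h1 : Eval I α t a) (h2 : Eval I α t b) : a = b := by
  induction h1 generalizing b with
  | var x => cases h2; rfl
  | app as hts hI ih =>
    cases h2 with
    | app as' hts' hI' =>
      have : as = as' := funext fun i => ih i (hts' i)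
      subst this
      rw [hI] at hI'; exact Option.some.inj hI'

theorem eval_subst_vars {I : Interp F ar A} {Y : Type} {β : Y → A}
    {σ : X → Tm F ar Y} {t : Tm F ar X} {a : A}
    (h : Eval I β (subst σ t) a) : ∀ x ∈ Vars t, ∃ b, Eval I β (σ x) b := by
  induction t generalizing a with
  | var x => intro y hy; cases hy; exact ⟨a, h⟩
  | app f ts ih =>
    intro y hy
    simp only [Vars, Set.mem_iUnion] at hy
    obtain ⟨i, hi⟩ := hy
    cases h with
    | app as hts hI => exact ih i (hts i) y hi

theorem eval_subst_up {I : Interp F ar A} {Y : Type} {β : Y → A} {α : X → A}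
    {σ : X → Tm F ar Y} {t : Tm F ar X} {a : A}
    (hσ : ∀ x ∈ Vars t, Eval I β (σ x) (α x))
    (h : Eval I β (subst σ t) a) : Eval I α t a := by
  induction t generalizing a with
  | var x =>
    have := hσ x rfl
    have := eval_det h this
    subst this; exact Eval.var x
  | app f ts ih =>
    cases h with
    | app as hts hI =>
      refine Eval.app as (fun i => ih i ?_ (hts i)) hI
      intro x hx
      exact hσ x (Set.mem_iUnion.mpr ⟨i, hx⟩)

theorem eval_subst_down {I : Interp F ar A} {Y : Type} {β : Y → A} {α : X → A}
    {σ : X → Tm F ar Y} {t : Tm F ar X} {a : A}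
    (hσ : ∀ x ∈ Vars t, Eval I β (σ x) (α x))
    (h : Eval I α t a) : Eval I β (subst σ t) a := by
  induction t generalizing a with
  | var x => cases h; exact hσ x rfl
  | app f ts ih =>
    cases h with
    | app as hts hI =>
      refine Eval.app as (fun i => ih i ?_ (hts i)) hI
      intro x hx
      exact hσ x (Set.mem_iUnion.mpr ⟨i, hx⟩)

theorem rw_mono {V : Type} {P Q : Set (Tm F ar X × Tm F ar X)} (hPQ : P ⊆ Q)
    {t t' : Tm F ar V} (h : Rw P t t') : Rw Q t t' := by
  induction h with
  | rule h σ => exact Rw.rule (hPQ h) σ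
  | ctxt i _ ih => exact Rw.ctxt i ih

theorem rw_union {V : Type} {P Q : Set (Tm F ar X × Tm F ar X)}
    {t t' : Tm F ar V} (h : Rw (P ∪ Q) t t') : Rw P t t' ∨ Rw Q t t' := by
  induction h with
  | rule h σ =>
    rcases h with h | h
    · exact Or.inl (Rw.rule h σ)
    · exact Or.inr (Rw.rule h σ)
  | ctxt i _ ih =>
    rcases ih with ih | ih
    · exact Or.inl (Rw.ctxt i ih)
    · exact Or.inr (Rw.ctxt i ih)

/-- Build an assignment from a substitution by evaluation. -/
noncomputable def asgOf [Nonempty A] (I : Interp F ar A) {Y : Type} (β : Y → A)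
    (σ : X → Tm F ar Y) : X → A :=
  fun x => Classical.epsilon (Eval I β (σ x))

theorem asgOf_spec [Nonempty A] {I : Interp F ar A} {Y : Type} {β : Y → A}
    {σ : X → Tm F ar Y} {x : X} (h : ∃ b, Eval I β (σ x) b) :
    Eval I β (σ x) (asgOf I β σ x) := by
  exact Classical.epsilon_spec h

/-- Definedness is preserved by rewriting with a partial model. -/
theorem eval_preserved [Nonempty A] {I : Interp F ar A} {ge : A → A → Prop}
    {Q : Set (Tm F ar X × Tm F ar X)} (hmono : MonoAlg I ge)
    (hQtrs : IsTRS Q) (hpm : PartialModel I ge Q)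
    {t t' : Tm F ar Empty} (hrw : Rw Q t t') {a : A}
    (h : Eval I Empty.elim t a) : ∃ b, Eval I Empty.elim t' b ∧ ge a b := by
  induction hrw generalizing a with
  | @rule l r hmem σ =>
    set α := asgOf I Empty.elim σ with hα
    have hvl : ∀ x ∈ Vars l, Eval I Empty.elim (σ x) (α x) := fun x hx =>
      asgOf_spec (eval_subst_vars h x hx)
    have hl : Eval I α l a := eval_subst_up hvl h
    obtain ⟨b, hrb, hab⟩ := hpm _ hmem α a hl
    have hvr : ∀ x ∈ Vars r, Eval I Empty.elim (σ x) (α x) := fun x hx =>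
      hvl x ((hQtrs _ hmem).2 hx)
    exact ⟨b, eval_subst_down hvr hrb, hab⟩
  | @ctxt f ts i t' hstep ih =>
    cases h with
    | app as hts hI =>
      obtain ⟨b, hb, hgb⟩ := ih (hts i)
      have hsome : (I f (Function.update as i b)).isSome := by
        refine (hmono f).1 as i b hgb ?_
        rw [hI]; rfl
      obtain ⟨c, hc⟩ := Option.isSome_iff_exists.mp hsome
      refine ⟨c, Eval.app (Function.update as i b) ?_ hc, ?_⟩
      · intro j
        rcases eq_or_ne j i with rfl | hne
        · simpa using hb
        · simp only [Function.update_of_ne hne]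
          exact hts j
      · exact (hmono f).2 as i b _ _ hgb hI hc

end Aux

/-- If `(A, I, ge)` is a monotone partial model for
`R ∪ R' ∪ S` with `T ⊆ L(A)` and all left-hand sides of `R'` are undefined,
then `SN_T(R/S)` implies `SN_T((R ∪ R')/S)`. -/
theorem remove_rules_with_undefined_lhs
    {F X : Type} {ar : F → ℕ}
    (R R' S : Set (Tm F ar X × Tm F ar X))
    (hR : IsTRS R) (hR' : IsTRS R') (hS : IsTRS S)
    (T : Set (Tm F ar Empty))
    {A : Type} [Nonempty A] (I : Interp F ar A) (ge : A → A → Prop)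
    (hmono : MonoAlg I ge)
    (hpm : PartialModel I ge (R ∪ R' ∪ S))
    (hT : DefinedOn I T)
    (hundef : ∀ p ∈ R', ∀ (α : X → A) (a : A), ¬ Eval I α p.1 a)
    (hsn : SNrelOn (Rw R) (Rw S) T) :
    SNrelOn (Rw (R ∪ R')) (Rw S) T := by
  -- No R'-step is possible from a term with defined interpretation.
  have noR' : ∀ (t t' : Tm F ar Empty), (∃ a, Eval I Empty.elim t a) →
      ¬ Rw R' t t' := by
    intro t t' hdef hrw
    induction hrw with
    | @rule l r hmem σ =>
      obtain ⟨a, ha⟩ := hdef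
      have hvl : ∀ x ∈ Vars l, Eval I Empty.elim (σ x) (asgOf I Empty.elim σ x) :=
        fun x hx => asgOf_spec (eval_subst_vars ha x hx)
      exact hundef _ hmem _ a (eval_subst_up hvl ha)
    | @ctxt f ts i t' hstep ih =>
      obtain ⟨a, ha⟩ := hdef
      cases ha with
      | app as hts hI => exact ih ⟨as i, hts i⟩
  have hUtrs : IsTRS (R ∪ R' ∪ S) := by
    rintro p (⟨hp | hp⟩ | hp)
    exacts [hR p hp, hR' p hp, hS p hp]
  intro t ht ⟨f, hf0, hsteps, hinf⟩
  -- every term in the sequence is defined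
  have hdef : ∀ n, ∃ a, Eval I Empty.elim (f n) a := by
    intro n
    induction n with
    | zero => rw [hf0]; exact hT t ht
    | succ n ih =>
      obtain ⟨a, ha⟩ := ih
      have hstep : Rw (R ∪ R' ∪ S) (f n) (f (n + 1)) := by
        rcases hsteps n with h | h
        · exact rw_mono Set.subset_union_left h
        · exact rw_mono Set.subset_union_right h
      obtain ⟨b, hb, _⟩ := eval_preserved hmono hUtrs hpm hstep ha
      exact ⟨b, hb⟩
  have key : ∀ n, Rw (R ∪ R') (f n) (f (n + 1)) → Rw R (f n) (f (n + 1)) := by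
    intro n h
    rcases rw_union h with h | h
    · exact h
    · exact absurd h (noR' _ _ (hdef n))
  refine hsn t ht ⟨f, hf0, fun n => ?_, fun m => ?_⟩
  · rcases hsteps n with h | h
    · exact Or.inl (key n h)
    · exact Or.inr h
  · obtain ⟨n, hmn, hn⟩ := hinf m
    exact ⟨n, hmn, key n hn⟩

end LocalTerm
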